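/- For 0 < x < 1, the limit as s → 1⁻ of ∑_{n=1}^∞ (−1)^{n+1} sin(nπx)/n^{1-s} equals (1/2)·tan(πx/2). -/

import Mathlib

open Filter Real Topology

section Aux
open Finset

lemma abel_id (w : ℂ) (b : ℕ → ℂ) (N : ℕ) :
    ∑ k ∈ range N, w^(k+1) * b k
      = ∑ k ∈ range N, (∑ j ∈ range (k+1), w^(j+1)) * (b k - b (k+1))
        + (∑ j ∈ range N, w^(j+1)) * b N := by
  induction N with
  | zero => simp
  | succ n ih =>
    rw [sum_range_succ, ih, sum_range_succ (fun k => (∑ j ∈ range (k+1), w^(j+1)) * (b k - b (k+1))),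
      sum_range_succ (fun j => w^(j+1))]
    ring

lemma Wformula (w : ℂ) (hw1 : w ≠ 1) (N : ℕ) :
    ∑ j ∈ range N, w^(j+1) = (w/(1-w)) * (1 - w^N) := by
  have h : w - 1 ≠ 0 := sub_ne_zero.mpr hw1
  have h' : 1 - w ≠ 0 := fun hh => h (by linear_combination -hh)
  have : ∑ j ∈ range N, w^(j+1) = w * ((w^N - 1)/(w-1)) := by
    rw [← geom_sum_eq hw1 N, Finset.mul_sum]
    exact Finset.sum_congr rfl fun j _ => by ring
  rw [this]; field_simp; ring

lemma Wbound (w : ℂ) (hw : ‖w‖ = 1) (hw1 : w ≠ 1) (N : ℕ) :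
    ‖∑ j ∈ range N, w^(j+1)‖ ≤ 2/‖1-w‖ := by
  have h1 : (0:ℝ) < ‖1 - w‖ := by
    simp only [norm_pos_iff]; intro h; apply hw1; linear_combination -h
  rw [Wformula w hw1, norm_mul, norm_div, hw]
  rw [div_mul_eq_mul_div, div_le_div_iff₀ h1 h1]
  have : ‖1 - w^N‖ ≤ 2 := by
    calc ‖1 - w^N‖ ≤ ‖(1:ℂ)‖ + ‖w^N‖ := norm_sub_le _ _
    _ = 2 := by rw [norm_pow, hw]; norm_num
  nlinarith

lemma conv_rpow (t : ℝ) (ht : 0 ≤ t) (a : ℝ) (ha : 0 < a) :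
    2*(a+1)^(-t) ≤ a^(-t) + (a+2)^(-t) := by
  have h1 : a^(-t) * (a+2)^(-t) = (a*(a+2))^(-t) := by
    rw [← Real.mul_rpow ha.le (by linarith)]
  have h2 : Real.sqrt ((a*(a+2))^(-t)) = (a*(a+2))^(-t/2) := by
    rw [Real.sqrt_eq_rpow, ← Real.rpow_mul (by positivity)]
    ring_nf
  have h3 : (a+1)^(-t) = ((a+1)^2)^(-t/2) := by
    rw [← Real.rpow_natCast (a+1) 2, ← Real.rpow_mul (by linarith)]
    norm_num; ring_nf
  have h4 : ((a+1)^2)^(-t/2) ≤ (a*(a+2))^(-t/2) := by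
    apply Real.rpow_le_rpow_of_nonpos (by positivity) (by nlinarith) (by linarith)
  have h5 : 2 * Real.sqrt ((a*(a+2))^(-t)) ≤ a^(-t) + (a+2)^(-t) := by
    rw [← h1, Real.sqrt_mul (by positivity)]
    nlinarith [sq_nonneg (Real.sqrt (a^(-t)) - Real.sqrt ((a+2)^(-t))),
      Real.sq_sqrt (Real.rpow_nonneg ha.le (-t)),
      Real.sq_sqrt (Real.rpow_nonneg (by linarith : (0:ℝ) ≤ a+2) (-t))]
  calc 2*(a+1)^(-t) = 2 * ((a+1)^2)^(-t/2) := by rw [h3]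
  _ ≤ 2 * (a*(a+2))^(-t/2) := by linarith
  _ = 2 * Real.sqrt ((a*(a+2))^(-t)) := by rw [h2]
  _ ≤ _ := h5

lemma key (w : ℂ) (hw : ‖w‖ = 1) (hw1 : w ≠ 1) (t : ℝ) (ht : 0 < t) :
    ∃ T : ℂ, Tendsto (fun N => ∑ k ∈ range N, w^(k+1) * ((((k:ℝ)+1)^(-t) : ℝ) : ℂ)) atTop (𝓝 T)
    ∧ ‖T - w/(1-w)‖ ≤ ‖w/(1-w)‖ * (2/‖1-w‖) * (1 - (2:ℝ)^(-t)) := by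
  set C : ℝ := 2/‖1-w‖ with hC
  set B : ℂ := w/(1-w) with hB
  set b : ℕ → ℝ := fun k => ((k:ℝ)+1)^(-t) with hbdef
  set c : ℕ → ℝ := fun k => b k - b (k+1) with hcdef
  set W : ℕ → ℂ := fun N => ∑ j ∈ range N, w^(j+1) with hWdef
  have hbpos : ∀ k, 0 < b k := fun k => Real.rpow_pos_of_pos (by positivity) _
  have hbanti : ∀ k, b (k+1) ≤ b k := by
    intro k
    apply Real.rpow_le_rpow_of_nonpos (by positivity) (by push_cast; linarith) (by linarith)
  have hc0 : ∀ k, 0 ≤ c k := fun k => sub_nonneg.mpr (hbanti k)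
  have hcanti : ∀ k, c (k+1) ≤ c k := by
    intro k
    have := conv_rpow t ht.le ((k:ℝ)+1) (by positivity)
    simp only [hcdef, hbdef]
    push_cast
    have e2 : (k:ℝ)+1+1+1 = (k:ℝ)+1+2 := by ring
    rw [e2]
    have e1 : (k:ℝ)+1+1 = (k:ℝ)+1+1 := rfl
    linarith
  have hb0 : b 0 = 1 := by simp [hbdef]
  have hb1 : b 1 = (2:ℝ)^(-t) := by norm_num [hbdef]
  have hblim : Tendsto b atTop (𝓝 0) := by
    have h1 : Tendsto (fun k : ℕ => (k:ℝ)+1) atTop atTop :=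
      tendsto_atTop_add_const_right _ 1 tendsto_natCast_atTop_atTop
    exact (tendsto_rpow_neg_atTop ht).comp h1
  have hbslim : Tendsto (fun k => b (k+1)) atTop (𝓝 0) := hblim.comp (tendsto_add_atTop_nat 1)
  have hclim : Tendsto c atTop (𝓝 0) := by simpa using hblim.sub hbslim
  have hcpsum : ∀ N, ∑ k ∈ range N, c k = b 0 - b N := fun N => Finset.sum_range_sub' b N
  have hcsum : Summable c :=
    summable_of_sum_range_le (c := b 0) hc0 (fun N => by rw [hcpsum]; linarith [(hbpos N).le])
  set d : ℕ → ℝ := fun k => c k - c (k+1) with hddef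
  have hd0 : ∀ k, 0 ≤ d k := fun k => sub_nonneg.mpr (hcanti k)
  have hdpsum : ∀ N, ∑ k ∈ range N, d k = c 0 - c N := fun N => Finset.sum_range_sub' c N
  have hdsum : Summable d :=
    summable_of_sum_range_le (c := c 0) hd0 (fun N => by rw [hdpsum]; linarith [hc0 N])
  have hdtsum : ∑' k, d k = c 0 := by
    have h1 : Tendsto (fun N => ∑ k ∈ range N, d k) atTop (𝓝 (∑' k, d k)) :=
      hdsum.hasSum.tendsto_sum_nat
    have h2 : Tendsto (fun N => ∑ k ∈ range N, d k) atTop (𝓝 (c 0)) := by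
      simp only [hdpsum]
      simpa using tendsto_const_nhds.sub hclim
    exact tendsto_nhds_unique h1 h2
  have hWb : ∀ N, ‖W N‖ ≤ C := fun N => Wbound w hw hw1 N
  have hCnn : 0 ≤ C := le_trans (norm_nonneg _) (hWb 1)
  -- R : the sum of w^{k+1} c k
  have hRnorm : ∀ k, ‖w^(k+1) * ((c k : ℝ) : ℂ)‖ = c k := by
    intro k
    rw [norm_mul, norm_pow, hw, one_pow, one_mul, Complex.norm_real,
      Real.norm_eq_abs, abs_of_nonneg (hc0 k)]
  have hRsum : Summable (fun k => w^(k+1) * ((c k : ℝ) : ℂ)) :=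
    Summable.of_norm (hcsum.congr (fun k => (hRnorm k).symm))
  set R : ℂ := ∑' k, w^(k+1) * ((c k : ℝ) : ℂ) with hR
  have hRlim : Tendsto (fun N => ∑ k ∈ range N, w^(k+1) * ((c k : ℝ) : ℂ)) atTop (𝓝 R) :=
    hRsum.hasSum.tendsto_sum_nat
  -- second abel summation for R
  have hWdnorm : ∀ k, ‖W (k+1) * (((c k : ℝ) : ℂ) - ((c (k+1) : ℝ) : ℂ))‖ ≤ C * d k := by
    intro k
    rw [norm_mul]
    have : ((c k : ℝ) : ℂ) - ((c (k+1) : ℝ) : ℂ) = ((d k : ℝ) : ℂ) := by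
      simp [hddef]
    rw [this, Complex.norm_real, Real.norm_eq_abs, abs_of_nonneg (hd0 k)]
    exact mul_le_mul_of_nonneg_right (hWb (k+1)) (hd0 k)
  have hWdsum : Summable (fun k => W (k+1) * (((c k : ℝ) : ℂ) - ((c (k+1) : ℝ) : ℂ))) := by
    apply Summable.of_norm
    exact Summable.of_nonneg_of_le (fun k => norm_nonneg _) hWdnorm (hdsum.mul_left C)
  have hRlim2 : Tendsto (fun N => ∑ k ∈ range N, w^(k+1) * ((c k : ℝ) : ℂ)) atTop
      (𝓝 (∑' k, W (k+1) * (((c k : ℝ) : ℂ) - ((c (k+1) : ℝ) : ℂ)))) := by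
    have heq : ∀ N, ∑ k ∈ range N, w^(k+1) * ((c k : ℝ) : ℂ)
        = ∑ k ∈ range N, W (k+1) * (((c k : ℝ) : ℂ) - ((c (k+1) : ℝ) : ℂ)) + W N * ((c N : ℝ) : ℂ) :=
      fun N => abel_id w (fun k => ((c k : ℝ) : ℂ)) N
    simp only [heq]
    have h1 : Tendsto (fun N => ∑ k ∈ range N, W (k+1) * (((c k : ℝ) : ℂ) - ((c (k+1) : ℝ) : ℂ)))
        atTop (𝓝 (∑' k, W (k+1) * (((c k : ℝ) : ℂ) - ((c (k+1) : ℝ) : ℂ)))) :=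
      hWdsum.hasSum.tendsto_sum_nat
    have h2 : Tendsto (fun N => W N * ((c N : ℝ) : ℂ)) atTop (𝓝 0) := by
      apply squeeze_zero_norm (a := fun N => C * c N)
      · intro N
        rw [norm_mul, Complex.norm_real, Real.norm_eq_abs, abs_of_nonneg (hc0 N)]
        exact mul_le_mul_of_nonneg_right (hWb N) (hc0 N)
      · simpa using hclim.const_mul C
    simpa using h1.add h2
  have hReq : R = ∑' k, W (k+1) * (((c k : ℝ) : ℂ) - ((c (k+1) : ℝ) : ℂ)) :=
    tendsto_nhds_unique hRlim hRlim2
  have hRbound : ‖R‖ ≤ C * c 0 := by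
    rw [hReq]
    calc ‖∑' k, W (k+1) * (((c k : ℝ) : ℂ) - ((c (k+1) : ℝ) : ℂ))‖
        ≤ ∑' k, ‖W (k+1) * (((c k : ℝ) : ℂ) - ((c (k+1) : ℝ) : ℂ))‖ :=
          norm_tsum_le_tsum_norm (Summable.of_nonneg_of_le (fun k => norm_nonneg _) hWdnorm (hdsum.mul_left C))
    _ ≤ ∑' k, C * d k := Summable.tsum_le_tsum hWdnorm
        (Summable.of_nonneg_of_le (fun k => norm_nonneg _) hWdnorm (hdsum.mul_left C)) (hdsum.mul_left C)
    _ = C * ∑' k, d k := tsum_mul_left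
    _ = C * c 0 := by rw [hdtsum]
  -- main limit
  refine ⟨B - B * R, ?_, ?_⟩
  · have heq : ∀ N, ∑ k ∈ range N, w^(k+1) * ((b k : ℝ) : ℂ)
        = B * ((b 0 - b N : ℝ) : ℂ) - B * (∑ k ∈ range N, w^(k+1) * ((c k : ℝ) : ℂ))
          + W N * ((b N : ℝ) : ℂ) := by
      intro N
      rw [abel_id w (fun k => ((b k : ℝ) : ℂ)) N]
      have e1 : ∑ k ∈ range N, W (k+1) * (((b k : ℝ) : ℂ) - ((b (k+1) : ℝ) : ℂ))
          = B * ((b 0 - b N : ℝ) : ℂ) - B * (∑ k ∈ range N, w^(k+1) * ((c k : ℝ) : ℂ)) := by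
        have e2 : ∀ k, W (k+1) * (((b k : ℝ) : ℂ) - ((b (k+1) : ℝ) : ℂ))
            = B * ((c k : ℝ) : ℂ) - B * (w^(k+1) * ((c k : ℝ) : ℂ)) := by
          intro k
          simp only [hWdef]
          rw [Wformula w hw1 (k+1)]
          have : (((b k : ℝ) : ℂ) - ((b (k+1) : ℝ) : ℂ)) = ((c k : ℝ) : ℂ) := by
            simp [hcdef]
          rw [this]
          ring
        rw [Finset.sum_congr rfl (fun k _ => e2 k), Finset.sum_sub_distrib, ← Finset.mul_sum,
          ← Finset.mul_sum]
        congr 1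
        · congr 1
          exact_mod_cast congrArg Complex.ofReal (hcpsum N)
      rw [e1]
    show Tendsto (fun N => ∑ k ∈ range N, w^(k+1) * ((b k : ℝ) : ℂ)) atTop (𝓝 (B - B * R))
    simp only [heq]
    have h1 : Tendsto (fun N => B * ((b 0 - b N : ℝ) : ℂ)) atTop (𝓝 (B * ((1:ℝ) : ℂ))) := by
      apply Tendsto.const_mul
      have h' : Tendsto (fun N => b 0 - b N) atTop (𝓝 1) := by
        rw [← hb0]
        simpa using tendsto_const_nhds.sub hblim
      exact (Complex.continuous_ofReal.tendsto 1).comp h'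
    have h2 : Tendsto (fun N => B * (∑ k ∈ range N, w^(k+1) * ((c k : ℝ) : ℂ))) atTop (𝓝 (B * R)) :=
      hRlim.const_mul B
    have h3 : Tendsto (fun N => W N * ((b N : ℝ) : ℂ)) atTop (𝓝 0) := by
      apply squeeze_zero_norm (a := fun N => C * b N)
      · intro N
        rw [norm_mul, Complex.norm_real, Real.norm_eq_abs, abs_of_nonneg (hbpos N).le]
        exact mul_le_mul_of_nonneg_right (hWb N) (hbpos N).le
      · simpa using hblim.const_mul C
    have := (h1.sub h2).add h3
    simpa using this
  · have : B - B * R - B = -(B * R) := by ring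
    rw [this, norm_neg, norm_mul]
    have hc0v : c 0 = 1 - (2:ℝ)^(-t) := by
      simp only [hcdef]
      rw [hb1, hb0]
    calc ‖B‖ * ‖R‖ ≤ ‖B‖ * (C * c 0) := by
          apply mul_le_mul_of_nonneg_left hRbound (norm_nonneg _)
    _ = ‖B‖ * C * (1 - (2:ℝ)^(-t)) := by rw [hc0v]; ring

end Aux

section Aux2
open Finset

/-- For `0 < x < 1`, the limit as `s → 1⁻` of `∑_{n=1}^∞ (-1)^{n+1} sin(nπx)/n^{1-s}`
equals `(1/2)·tan(πx/2)`. -/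
theorem stmt3 (x : ℝ) (hx0 : 0 < x) (hx1 : x < 1) (F : ℝ → ℝ)
    (hF : ∀ s : ℝ, s < 1 →
      Tendsto (fun N : ℕ => ∑ n ∈ Finset.range N,
        (-1 : ℝ) ^ n * Real.sin ((n + 1) * π * x) / ((n : ℝ) + 1) ^ (1 - s)) atTop (𝓝 (F s))) :
    Tendsto F (𝓝[<] 1) (𝓝 ((1 / 2) * Real.tan (π * x / 2))) := by
  have hπ := Real.pi_pos
  set θ : ℝ := π * x with hθ
  have hθ0 : 0 < θ := by positivity
  have hθπ : θ < π := by
    rw [hθ]; nlinarith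
  set w : ℂ := -Complex.exp (θ * Complex.I) with hwdef
  have hw : ‖w‖ = 1 := by
    rw [hwdef, norm_neg, Complex.norm_exp_ofReal_mul_I]
  have hcosθ : -1 < Real.cos θ := by
    have := Real.cos_lt_cos_of_nonneg_of_le_pi hθ0.le le_rfl hθπ
    rwa [Real.cos_pi] at this
  have hw1 : w ≠ 1 := by
    intro h
    have : (Complex.exp (θ * Complex.I)).re = -1 := by
      have : Complex.exp (θ * Complex.I) = -1 := by
        rw [hwdef] at h; linear_combination -h
      rw [this]; simp
    rw [Complex.exp_ofReal_mul_I_re] at this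
    linarith
  set B : ℂ := w/(1-w) with hB
  set L : ℝ := -B.im with hL
  -- identify L
  have hcoshalf : 0 < Real.cos (θ/2) :=
    Real.cos_pos_of_mem_Ioo ⟨by linarith, by linarith⟩
  have hLeq : L = (1/2) * Real.tan (π * x / 2) := by
    have hre : w.re = -Real.cos θ := by
      rw [hwdef]; simp [Complex.exp_ofReal_mul_I_re]
    have him : w.im = -Real.sin θ := by
      rw [hwdef]; simp [Complex.exp_ofReal_mul_I_im]
    have hD : Complex.normSq (1-w) = 2 + 2*Real.cos θ := by
      rw [Complex.normSq_apply]
      simp only [Complex.sub_re, Complex.sub_im, Complex.one_re, Complex.one_im, hre, him]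
      nlinarith [Real.sin_sq_add_cos_sq θ]
    have hDpos : (0:ℝ) < 2 + 2*Real.cos θ := by linarith
    have hBim : B.im = -Real.sin θ / (2 + 2*Real.cos θ) := by
      rw [hB, Complex.div_im, hD]
      simp only [Complex.sub_re, Complex.sub_im, Complex.one_re, Complex.one_im, hre, him]
      field_simp
      ring
    have hsin : Real.sin θ = 2 * Real.sin (θ/2) * Real.cos (θ/2) := by
      have := Real.sin_two_mul (θ/2)
      rw [show 2*(θ/2) = θ by ring] at this
      linarith
    have hcos : Real.cos θ = 2 * Real.cos (θ/2)^2 - 1 := by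
      have := Real.cos_two_mul (θ/2)
      rw [show 2*(θ/2) = θ by ring] at this
      linarith
    have : π * x / 2 = θ/2 := by rw [hθ]
    rw [hL, hBim, this, Real.tan_eq_sin_div_cos]
    rw [hsin, hcos]
    have h2 : 2 + 2*(2 * Real.cos (θ/2)^2 - 1) = 4 * Real.cos (θ/2)^2 := by ring
    rw [h2]
    field_simp
    ring
  -- pointwise bound
  set K : ℝ := ‖B‖ * (2/‖1-w‖) with hK
  have hKnn : 0 ≤ K := by positivity
  have hbound : ∀ s : ℝ, s < 1 → |F s - L| ≤ K * (1 - (2:ℝ)^(-(1-s))) := by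
    intro s hs
    have ht : 0 < 1 - s := by linarith
    obtain ⟨T, hTlim, hTbound⟩ := key w hw hw1 (1-s) ht
    -- identify F s = -T.im
    have hterm : ∀ n : ℕ, (-1 : ℝ) ^ n * Real.sin ((n + 1) * π * x) / ((n : ℝ) + 1) ^ (1 - s)
        = -(w^(n+1) * ((((n:ℝ)+1)^(-(1-s)) : ℝ) : ℂ)).im := by
      intro n
      have h1 : w^(n+1) = ((-1:ℝ)^(n+1) : ℂ) * Complex.exp ((((n:ℝ)+1)*θ : ℝ) * Complex.I) := by
        rw [hwdef, neg_pow, ← Complex.exp_nat_mul]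
        push_cast
        ring_nf
      rw [h1]
      have h2 : (((-1:ℝ)^(n+1) : ℂ) * Complex.exp ((((n:ℝ)+1)*θ : ℝ) * Complex.I)
          * ((((n:ℝ)+1)^(-(1-s)) : ℝ) : ℂ)).im
          = (-1:ℝ)^(n+1) * Real.sin (((n:ℝ)+1)*θ) * (((n:ℝ)+1)^(-(1-s))) := by
        rw [mul_assoc, ← Complex.ofReal_pow, Complex.im_ofReal_mul, Complex.mul_im,
          Complex.ofReal_re, Complex.ofReal_im, Complex.exp_ofReal_mul_I_im]
        ring
      rw [h2]
      rw [Real.rpow_neg (by positivity)]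
      rw [show ((n:ℝ)+1)*θ = ((n:ℝ)+1)*π*x by rw [hθ]; ring]
      rw [pow_succ]
      field_simp
    have hPlim : Tendsto (fun N : ℕ => ∑ n ∈ Finset.range N,
        (-1 : ℝ) ^ n * Real.sin ((n + 1) * π * x) / ((n : ℝ) + 1) ^ (1 - s)) atTop (𝓝 (-T.im)) := by
      have h3 : ∀ N : ℕ, ∑ n ∈ Finset.range N,
          (-1 : ℝ) ^ n * Real.sin ((n + 1) * π * x) / ((n : ℝ) + 1) ^ (1 - s)
          = -(∑ k ∈ range N, w^(k+1) * ((((k:ℝ)+1)^(-(1-s)) : ℝ) : ℂ)).im := by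
        intro N
        rw [Complex.im_sum, ← Finset.sum_neg_distrib]
        exact Finset.sum_congr rfl fun n _ => hterm n
      simp only [h3]
      exact ((Complex.continuous_im.tendsto T).comp hTlim).neg
    have hFs : F s = -T.im := tendsto_nhds_unique (hF s hs) hPlim
    rw [hFs, hL]
    have : |(-T.im) - -B.im| = |(T - B).im| := by
      rw [Complex.sub_im]; rw [abs_sub_comm]; congr 1; ring
    rw [this]
    calc |(T-B).im| ≤ ‖T-B‖ := Complex.abs_im_le_norm _
    _ = ‖T - B‖ := rfl
    _ ≤ K * (1 - (2:ℝ)^(-(1-s))) := hTbound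
  -- squeeze
  have hgt : Tendsto (fun s : ℝ => K * (1 - (2:ℝ)^(-(1-s)))) (𝓝[<] 1) (𝓝 0) := by
    have hcont : Continuous (fun s : ℝ => K * (1 - (2:ℝ)^(-(1-s)))) := by
      have : (fun s : ℝ => K * (1 - (2:ℝ)^(-(1-s))))
          = fun s : ℝ => K * (1 - Real.exp (Real.log 2 * (-(1-s)))) := by
        funext s
        rw [Real.rpow_def_of_pos (by norm_num)]
      rw [this]
      continuity
    have h0 : (fun s : ℝ => K * (1 - (2:ℝ)^(-(1-s)))) 1 = 0 := by
      norm_num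
    have h2 : Tendsto (fun s : ℝ => K * (1 - (2:ℝ)^(-(1-s)))) (𝓝[<] 1)
        (𝓝 ((fun s : ℝ => K * (1 - (2:ℝ)^(-(1-s)))) 1)) :=
      (hcont.tendsto 1).mono_left nhdsWithin_le_nhds
    rwa [h0] at h2
  rw [hLeq] at hbound
  have habs : Tendsto (fun s => |F s - (1 / 2) * Real.tan (π * x / 2)|) (𝓝[<] 1) (𝓝 0) := by
    apply squeeze_zero' (Eventually.of_forall fun s => abs_nonneg _) _ hgt
    filter_upwards [self_mem_nhdsWithin] with s hs
    exact hbound s hs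
  rw [tendsto_iff_dist_tendsto_zero]
  simpa [Real.dist_eq] using habs

end Aux2
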